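/- Let I be a bounded interval, γ_n := 2π|I|⁻¹ n, y ∈ ℝ, r > 0, R > 0, and let ω be a real number with |ω − y| < r. Then Σ_{n∈ℤ, |γ_n − y| ≥ r+R} 1/|ω − γ_n|² ≤ 2 Σ_{n=0}^{∞} 1/(2π|I|⁻¹ n + R)², and the right-hand side is O(1/R) as R → ∞, uniformly in y, r and ω. -/

import Mathlib

open MeasureTheory Filter

noncomputable section
set_option maxHeartbeats 800000

private lemma auxSummable (a R : ℝ) (ha : 0 < a) (hR : 0 < R) :
    Summable (fun n : ℕ => 1 / (a * n + R) ^ 2) := by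
  rw [← summable_nat_add_iff 1]
  have hmaj : Summable (fun n : ℕ => 1 / a ^ 2 * (1 / ((n : ℝ) + 1) ^ 2)) := by
    apply Summable.mul_left
    have : Summable (fun n : ℕ => 1 / ((n : ℝ)) ^ 2) := Real.summable_one_div_nat_pow.2 one_lt_two
    have := (summable_nat_add_iff 1).2 this
    simpa using this
  refine Summable.of_nonneg_of_le (fun n => by positivity) (fun n => ?_) hmaj
  have h1 : (0:ℝ) < a * ((n : ℝ) + 1) := by positivity
  have h2 : a * ((n : ℝ) + 1) ≤ a * (((n + 1 : ℕ) : ℝ)) + R := by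
    push_cast; linarith
  calc 1 / (a * ((n + 1 : ℕ) : ℝ) + R) ^ 2 ≤ 1 / (a * ((n : ℝ) + 1)) ^ 2 := by
        exact one_div_le_one_div_of_le (by positivity) (pow_le_pow_left₀ h1.le h2 2)
    _ = 1 / a ^ 2 * (1 / ((n : ℝ) + 1) ^ 2) := by
        rw [mul_pow]; rw [one_div, mul_inv, ← one_div, ← one_div]

private lemma auxBound (a R : ℝ) (ha : 0 < a) (hR : 0 < R) :
    (∑' n : ℕ, 1 / (a * n + R) ^ 2) ≤ 1 / R ^ 2 + 1 / (a * R) := by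
  have hsum := auxSummable a R ha hR
  have htel : HasSum (fun n : ℕ => 1 / (a * n + R) - 1 / (a * (n + 1 : ℕ) + R)) (1 / R) := by
    have hpos : ∀ n : ℕ, (0:ℝ) < a * n + R := fun n => by positivity
    have hmono : ∀ n : ℕ, (0:ℝ) ≤ 1 / (a * n + R) - 1 / (a * (n + 1 : ℕ) + R) := by
      intro n
      have h1 := hpos n
      have h2 : a * (n : ℝ) + R ≤ a * ((n + 1 : ℕ) : ℝ) + R := by push_cast; nlinarith
      have := one_div_le_one_div_of_le h1 h2
      linarith
    rw [hasSum_iff_tendsto_nat_of_nonneg hmono]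
    have heq : ∀ n : ℕ, ∑ i ∈ Finset.range n,
        (1 / (a * i + R) - 1 / (a * (i + 1 : ℕ) + R)) = 1 / (a * (0:ℕ) + R) - 1 / (a * n + R) := by
      intro n
      exact Finset.sum_range_sub' (fun i => 1 / (a * i + R)) n
    simp only [heq, Nat.cast_zero, mul_zero, zero_add]
    have hlim : Tendsto (fun n : ℕ => 1 / (a * n + R)) atTop (nhds 0) := by
      have h1 : Tendsto (fun n : ℕ => a * (n : ℝ) + R) atTop atTop :=
        (tendsto_natCast_atTop_atTop.const_mul_atTop ha).atTop_add tendsto_const_nhds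
      simpa [one_div, Pi.inv_def] using h1.inv_tendsto_atTop
    simpa using tendsto_const_nhds.sub hlim
  have hshift : Summable (fun n : ℕ => 1 / (a * ((n + 1 : ℕ) : ℝ) + R) ^ 2) :=
    (summable_nat_add_iff 1).2 hsum
  rw [Summable.tsum_eq_zero_add hsum]
  have hle : (∑' n : ℕ, 1 / (a * ((n + 1 : ℕ) : ℝ) + R) ^ 2) ≤
      ∑' n : ℕ, (1 / a) * (1 / (a * n + R) - 1 / (a * (n + 1 : ℕ) + R)) := by
    refine Summable.tsum_le_tsum (fun n => ?_) hshift ((htel.mul_left (1 / a)).summable)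
    have hx : (0:ℝ) < a * n + R := by positivity
    have hy : (0:ℝ) < a * ((n + 1 : ℕ) : ℝ) + R := by positivity
    have hd : 1 / (a * (n : ℝ) + R) - 1 / (a * ((n + 1 : ℕ) : ℝ) + R)
        = a / ((a * n + R) * (a * ((n + 1 : ℕ) : ℝ) + R)) := by
      rw [div_sub_div _ _ hx.ne' hy.ne', div_eq_div_iff (by positivity) (by positivity)]
      push_cast; ring
    rw [hd, div_mul_div_comm, one_mul]
    rw [div_le_div_iff₀ (by positivity) (by positivity)]
    have hxy : a * (n : ℝ) + R ≤ a * ((n + 1 : ℕ) : ℝ) + R := by push_cast; nlinarith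
    nlinarith [mul_le_mul_of_nonneg_right hxy hy.le, sq_nonneg (a * ((n + 1 : ℕ) : ℝ) + R)]
  have hval : (∑' n : ℕ, (1 / a) * (1 / (a * n + R) - 1 / (a * (n + 1 : ℕ) + R))) = 1 / (a * R) := by
    rw [(htel.mul_left (1 / a)).tsum_eq, one_div_mul_eq_div, div_div, mul_comm R a]
  simp only [Nat.cast_zero, mul_zero, zero_add]
  calc 1 / R ^ 2 + ∑' n : ℕ, 1 / (a * ((n + 1 : ℕ) : ℝ) + R) ^ 2
      ≤ 1 / R ^ 2 + 1 / (a * R) := by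
        have := hle.trans (le_of_eq hval); linarith

theorem stmt17 (L : ℝ) (hL : 0 < L) :
    (∀ y r R ωv : ℝ, 0 < r → 0 < R → |ωv - y| < r →
      (∑' n : {n : ℤ // r + R ≤ |2 * Real.pi / L * n - y|},
          1 / |ωv - 2 * Real.pi / L * (n : ℤ)| ^ 2) ≤
        2 * ∑' n : ℕ, 1 / (2 * Real.pi / L * n + R) ^ 2) ∧
    ∃ C : ℝ, 0 < C ∧ ∃ R₀ : ℝ, 0 < R₀ ∧ ∀ R : ℝ, R₀ ≤ R →
      2 * (∑' n : ℕ, 1 / (2 * Real.pi / L * n + R) ^ 2) ≤ C / R := by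
  have hπ := Real.pi_pos
  set a : ℝ := 2 * Real.pi / L with ha_def
  have ha : 0 < a := by positivity
  constructor
  · intro y r R ω hr hR hω
    set c := r + R with hcdef
    have hc0 : 0 < c := by positivity
    set F : ℤ → ℝ := fun n => 1 / |ω - a * n| ^ 2 with hF
    set Sp : Set ℤ := {n : ℤ | c ≤ a * n - y} with hSp
    set Sm : Set ℤ := {n : ℤ | c ≤ -(a * n - y)} with hSm
    set h : ℕ → ℝ := fun k => 1 / (a * k + R) ^ 2 with hh
    have hsum := auxSummable a R ha hR
    have hnonneg : ∀ k, 0 ≤ h k := fun k => by rw [hh]; positivity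
    set np : ℤ := ⌈(y + c) / a⌉ with hnp
    set nm : ℤ := ⌊(y - c) / a⌋ with hnm
    have hnp' : y + c ≤ a * np := by
      have h1 := Int.le_ceil ((y + c) / a)
      rw [div_le_iff₀ ha] at h1
      rw [hnp]; linarith
    have hnm' : a * nm ≤ y - c := by
      have h1 := Int.floor_le ((y - c) / a)
      rw [le_div_iff₀ ha] at h1
      rw [hnm]; linarith
    rw [abs_sub_lt_iff] at hω
    obtain ⟨hω1, hω2⟩ := hω
    have hgep : ∀ n : ℤ, n ∈ Sp → np ≤ n := by
      intro n hn
      have hmem : c ≤ a * n - y := hn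
      rw [hnp, Int.ceil_le, div_le_iff₀ ha]
      linarith
    have hgem : ∀ n : ℤ, n ∈ Sm → n ≤ nm := by
      intro n hn
      have hmem : c ≤ -(a * n - y) := hn
      rw [hnm, Int.le_floor, le_div_iff₀ ha]
      linarith
    have keyp : ∀ n : ℤ, n ∈ Sp → F n ≤ h ((n - np).toNat) := by
      intro n hn
      have hmem : c ≤ a * n - y := hn
      have hge := hgep n hn
      have hkZ : (((n - np).toNat : ℤ) : ℝ) = (n : ℝ) - np := by
        rw [Int.toNat_of_nonneg (sub_nonneg.2 hge)]; push_cast; ring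
      have hkR : (((n - np).toNat : ℕ) : ℝ) = (n : ℝ) - (np : ℝ) := by
        exact_mod_cast hkZ
      set k : ℕ := (n - np).toNat with hk
      have hpos : (0 : ℝ) < a * k + R := by positivity
      have e1 : a * ((n : ℝ) - (np : ℝ)) = a * k := by rw [hkR]
      have e2 : a * (n : ℝ) - a * (np : ℝ) = a * ((n : ℝ) - (np : ℝ)) := by ring
      have h1 : a * k + R ≤ a * (n : ℝ) - ω := by
        rw [hcdef] at hnp'
        linarith
      have hlow : a * k + R ≤ |ω - a * n| := by
        rw [abs_sub_comm]
        exact h1.trans (le_abs_self _)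
      rw [hF, hh]
      exact one_div_le_one_div_of_le (by positivity) (pow_le_pow_left₀ hpos.le hlow 2)
    have keym : ∀ n : ℤ, n ∈ Sm → F n ≤ h ((nm - n).toNat) := by
      intro n hn
      have hmem : c ≤ -(a * n - y) := hn
      have hge := hgem n hn
      have hkZ : (((nm - n).toNat : ℤ) : ℝ) = (nm : ℝ) - n := by
        rw [Int.toNat_of_nonneg (sub_nonneg.2 hge)]; push_cast; ring
      have hkR : (((nm - n).toNat : ℕ) : ℝ) = (nm : ℝ) - (n : ℝ) := by
        exact_mod_cast hkZ
      set k : ℕ := (nm - n).toNat with hk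
      have hpos : (0 : ℝ) < a * k + R := by positivity
      have e1 : a * ((nm : ℝ) - (n : ℝ)) = a * k := by rw [hkR]
      have e2 : a * (nm : ℝ) - a * (n : ℝ) = a * ((nm : ℝ) - (n : ℝ)) := by ring
      have h1 : a * k + R ≤ ω - a * (n : ℝ) := by
        rw [hcdef] at hnm'
        linarith
      have hlow : a * k + R ≤ |ω - a * n| := h1.trans (le_abs_self _)
      rw [hF, hh]
      exact one_div_le_one_div_of_le (by positivity) (pow_le_pow_left₀ hpos.le hlow 2)
    have injp : Function.Injective (fun n : Sp => (n.1 - np).toNat) := by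
      rintro ⟨n, hn⟩ ⟨m, hm⟩ hnm2
      simp only at hnm2
      have h1 : ((n - np).toNat : ℤ) = n - np := Int.toNat_of_nonneg (sub_nonneg.2 (hgep n hn))
      have h2 : ((m - np).toNat : ℤ) = m - np := Int.toNat_of_nonneg (sub_nonneg.2 (hgep m hm))
      have heq : n - np = m - np := by rw [← h1, ← h2, hnm2]
      exact Subtype.ext (show n = m by omega)
    have injm : Function.Injective (fun n : Sm => (nm - n.1).toNat) := by
      rintro ⟨n, hn⟩ ⟨m, hm⟩ hnm2
      simp only at hnm2
      have h1 : ((nm - n).toNat : ℤ) = nm - n := Int.toNat_of_nonneg (sub_nonneg.2 (hgem n hn))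
      have h2 : ((nm - m).toNat : ℤ) = nm - m := Int.toNat_of_nonneg (sub_nonneg.2 (hgem m hm))
      have heq : nm - n = nm - m := by rw [← h1, ← h2, hnm2]
      exact Subtype.ext (show n = m by omega)
    have hFnn : ∀ n : ℤ, 0 ≤ F n := fun n => by rw [hF]; positivity
    have hsp : Summable (F ∘ ((↑) : Sp → ℤ)) :=
      Summable.of_nonneg_of_le (fun n => hFnn _) (fun n => keyp n.1 n.2)
        (hsum.comp_injective injp)
    have hsm : Summable (F ∘ ((↑) : Sm → ℤ)) :=
      Summable.of_nonneg_of_le (fun n => hFnn _) (fun n => keym n.1 n.2)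
        (hsum.comp_injective injm)
    have hdisj : Disjoint Sp Sm := by
      rw [Set.disjoint_left]
      intro n h1 h2
      have h1' : c ≤ a * n - y := h1
      have h2' : c ≤ -(a * n - y) := h2
      linarith
    have hiff : ∀ n : ℤ, (c ≤ |a * n - y|) ↔ n ∈ Sp ∪ Sm := fun n => by
      rw [le_abs]; exact Iff.rfl
    calc (∑' n : {n : ℤ // c ≤ |a * (n : ℤ) - y|}, F n)
        = ∑' n : ↑(Sp ∪ Sm), F n := by
          rw [← Equiv.tsum_eq (Equiv.subtypeEquivRight hiff) (fun n : ↑(Sp ∪ Sm) => F n)]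
          exact tsum_congr fun n => rfl
      _ = (∑' n : Sp, F n) + ∑' n : Sm, F n := Summable.tsum_union_disjoint hdisj hsp hsm
      _ ≤ (∑' k : ℕ, h k) + ∑' k : ℕ, h k := by
          refine add_le_add ?_ ?_
          · exact Summable.tsum_le_tsum_of_inj _ injp (fun _ _ => hnonneg _)
              (fun n => keyp n.1 n.2) hsp hsum
          · exact Summable.tsum_le_tsum_of_inj _ injm (fun _ _ => hnonneg _)
              (fun n => keym n.1 n.2) hsm hsum
      _ = 2 * ∑' k : ℕ, h k := (two_mul _).symm
  · refine ⟨2 * (1 + 1 / a), by positivity, 1, one_pos, fun R hR => ?_⟩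
    have hR0 : (0:ℝ) < R := lt_of_lt_of_le one_pos hR
    have hb := auxBound a R ha hR0
    have h1 : 1 / R ^ 2 ≤ 1 / R := by
      apply one_div_le_one_div_of_le hR0; nlinarith
    have h2 : 1 / (a * R) = (1 / a) * (1 / R) := by
      rw [one_div, mul_inv, one_div, one_div]
    have : (∑' n : ℕ, 1 / (a * n + R) ^ 2) ≤ 1 / R + (1 / a) * (1 / R) := by
      rw [h2] at hb; linarith
    calc 2 * (∑' n : ℕ, 1 / (a * n + R) ^ 2) ≤ 2 * (1 / R + (1 / a) * (1 / R)) := by linarith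
      _ = 2 * (1 + 1 / a) / R := by ring
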